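/- Let φ(z) = 2e^{−z} + sin(z). For every m ≥ 1 there exist a, b ∈ ℂ (one can take a = kπ and b = kπ + π/(2m) for k large enough) such that |φ(mb)| > 1 and for all n ∈ {1,…,m} and d ∈ {0,…,n} with (n,d) ≠ (m,m), |φ(db + (n−d)a)| < 1. -/

import Mathlib

open Real

lemma abs_real_phi (x : ℝ) :
    ‖2 * Complex.exp (-(x:ℂ)) + Complex.sin (x:ℂ)‖
      = |2 * Real.exp (-x) + Real.sin x| := by
  rw [show (-(x:ℂ)) = ((-x : ℝ) : ℂ) by push_cast; ring, ← Complex.ofReal_exp,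
    ← Complex.ofReal_sin]
  rw [show (2 * ((Real.exp (-x) : ℝ) : ℂ) + ((Real.sin x : ℝ) : ℂ))
      = ((2 * Real.exp (-x) + Real.sin x : ℝ) : ℂ) by push_cast; ring]
  exact Complex.norm_real _

theorem example_phi_large (m : ℕ) (hm : 1 ≤ m) :
    ∃ a b : ℂ,
      1 < ‖2 * Complex.exp (-((m : ℂ) * b)) + Complex.sin ((m : ℂ) * b)‖ ∧
      ∀ n : ℕ, 1 ≤ n → n ≤ m → ∀ d : ℕ, d ≤ n → (n, d) ≠ (m, m) →
        ‖2 * Complex.exp (-((d : ℂ) * b + ((n : ℂ) - (d : ℂ)) * a))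
          + Complex.sin ((d : ℂ) * b + ((n : ℂ) - (d : ℂ)) * a)‖ < 1 := by
  have hm0 : (0:ℝ) < m := by exact_mod_cast hm
  set t : ℝ := Real.pi / (2 * m) with ht_def
  have ht0 : 0 < t := by
    apply div_pos Real.pi_pos; positivity
  have hmt : (m : ℝ) * t = Real.pi / 2 := by
    rw [ht_def]; field_simp
  have hm1 : (1:ℝ) ≤ m := by exact_mod_cast hm
  have ht2 : t ≤ Real.pi / 2 := by
    rw [← hmt]
    nlinarith [ht0]
  have hc1 : Real.cos t < 1 := by
    have := Real.cos_lt_cos_of_nonneg_of_le_pi (le_refl 0)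
      (ht2.trans (by linarith [Real.pi_pos])) ht0
    simpa using this
  obtain ⟨N, hN⟩ := exists_nat_gt (2 / (1 - Real.cos t))
  have hNpos : (0:ℝ) < 2 / (1 - Real.cos t) := div_pos two_pos (by linarith)
  have hEN : 2 * Real.exp (-(2 * N * Real.pi)) < 1 - Real.cos t := by
    have hexp : 2 / (1 - Real.cos t) < Real.exp (2 * N * Real.pi) := by
      have h1 : 2 * (N:ℝ) * Real.pi + 1 ≤ Real.exp (2 * N * Real.pi) :=
        Real.add_one_le_exp _
      nlinarith [Real.pi_gt_three, hN, hNpos]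
    rw [Real.exp_neg]
    rw [div_lt_iff₀ (by linarith)] at hexp
    have h2 : Real.exp (2 * ↑N * Real.pi) > 0 := Real.exp_pos _
    rw [mul_inv_lt_iff₀ h2]
    nlinarith
  refine ⟨((2*N*Real.pi : ℝ):ℂ), ((2*N*Real.pi + t : ℝ):ℂ), ?_, ?_⟩
  · have harg : (m : ℂ) * ((2*N*Real.pi + t : ℝ):ℂ) = ((m * (2*N*Real.pi + t) : ℝ):ℂ) := by
      push_cast; ring
    rw [harg, abs_real_phi]
    have hx : (m : ℝ) * (2*N*Real.pi + t) = Real.pi/2 + (m*N : ℕ) * (2*Real.pi) := by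
      push_cast; nlinarith [hmt]
    rw [hx, Real.sin_add_nat_mul_two_pi, Real.sin_pi_div_two]
    have := Real.exp_pos (-(Real.pi/2 + (m*N : ℕ) * (2*Real.pi)))
    rw [abs_of_pos (by linarith)]
    linarith
  · intro n hn1 hnm d hdn hne
    have hdm : d < m := by
      rcases lt_or_eq_of_le (hdn.trans hnm) with h | h
      · exact h
      · exfalso; apply hne
        have : n = m := le_antisymm hnm (h ▸ hdn)
        simp [this, h]
    have harg : (d : ℂ) * ((2*N*Real.pi + t : ℝ):ℂ) + ((n : ℂ) - (d : ℂ)) * ((2*N*Real.pi : ℝ):ℂ)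
        = ((d * t + (n*N : ℕ) * (2*Real.pi) : ℝ):ℂ) := by
      push_cast; ring
    rw [harg, abs_real_phi, Real.sin_add_nat_mul_two_pi]
    have hdt0 : 0 ≤ (d:ℝ) * t := by positivity
    have hdt2 : (d:ℝ) * t + t ≤ Real.pi / 2 := by
      rw [← hmt]
      have : (d:ℝ) + 1 ≤ m := by exact_mod_cast hdm
      nlinarith
    have hsin0 : 0 ≤ Real.sin ((d:ℝ) * t) :=
      Real.sin_nonneg_of_nonneg_of_le_pi hdt0 (by linarith [Real.pi_pos])
    have hsinle : Real.sin ((d:ℝ) * t) ≤ Real.cos t := by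
      have : Real.sin ((d:ℝ) * t) ≤ Real.sin (Real.pi/2 - t) := by
        apply Real.sin_le_sin_of_le_of_le_pi_div_two (by linarith [Real.pi_pos]) (by linarith)
        linarith
      rwa [Real.sin_pi_div_two_sub] at this
    have hexple : Real.exp (-((d:ℝ) * t + (n*N : ℕ) * (2*Real.pi)))
        ≤ Real.exp (-(2 * N * Real.pi)) := by
      apply Real.exp_le_exp.2
      have hn1' : (1:ℝ) ≤ n := by exact_mod_cast hn1
      have : (2:ℝ) * N * Real.pi ≤ (n*N : ℕ) * (2*Real.pi) := by
        push_cast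
        have h := mul_le_mul_of_nonneg_right hn1'
          (by positivity : (0:ℝ) ≤ (N:ℝ) * (2*Real.pi))
        nlinarith
      linarith
    have hexp0 := Real.exp_pos (-((d:ℝ) * t + (n*N : ℕ) * (2*Real.pi)))
    rw [abs_of_nonneg (by linarith)]
    linarith
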